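/- Poincaré-type inequality for functions with small mean: for every θ ∈ (0,π), setting M(θ) = (1/θ)·2π²/(π² - θ²), if u ∈ W₀^{1,2}(-θ,θ) satisfies (∫_{-θ}^{θ} u)² ≤ (1/M(θ)) ∫_{-θ}^{θ} u², then ∫_{-θ}^{θ} ((u')² - u²) ≥ (1/4)(1 - θ²/π²) ∫_{-θ}^{θ} (u')² + (1/2)(π²/θ² - 1) ∫_{-θ}^{θ} u². -/

import Mathlib

open Real MeasureTheory Set intervalIntegral

/-- `u ∈ W^{1,2}_0(-θ,θ)` with weak derivative `u'`: `u'` and `(u')^2` are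
integrable on `(-θ,θ)`, `u` is the primitive of `u'` starting from `-θ`
(hence absolutely continuous with `u(-θ)=0`), and `u(θ)=0`. -/
def MemW120 (θ : ℝ) (u u' : ℝ → ℝ) : Prop :=
  IntervalIntegrable u' volume (-θ) θ ∧
  IntervalIntegrable (fun t => (u' t)^2) volume (-θ) θ ∧
  (∀ x ∈ Set.Icc (-θ) θ, u x = ∫ t in (-θ)..x, u' t) ∧
  u θ = 0

section helpers
variable {T : ℝ} [hT : Fact (0 < T)]

lemma measurable_liftIoc (a : ℝ) {f : ℝ → ℂ} (hf : Measurable f) :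
    Measurable (AddCircle.liftIoc T a f) := by
  have h1 : AddCircle.liftIoc T a f =
      (f ∘ (Subtype.val)) ∘ (AddCircle.measurableEquivIoc T a) := rfl
  rw [h1]
  exact (hf.comp measurable_subtype_coe).comp (AddCircle.measurableEquivIoc T a).measurable

lemma liftIoc_mem_bound (a : ℝ) {f : ℝ → ℂ} {C : ℝ} (hC : ∀ x ∈ Ioc a (a + T), ‖f x‖ ≤ C)
    (z : AddCircle T) : ‖AddCircle.liftIoc T a f z‖ ≤ C := by
  have h1 : AddCircle.liftIoc T a f z = f ((AddCircle.equivIoc T a z : Ioc a (a+T)) : ℝ) := rfl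
  rw [h1]
  exact hC _ (AddCircle.equivIoc T a z).2

lemma haar_eq_smul_volume :
    (AddCircle.haarAddCircle : Measure (AddCircle T)) = (ENNReal.ofReal T)⁻¹ • volume := by
  rw [AddCircle.volume_eq_smul_haarAddCircle, smul_smul,
    ENNReal.inv_mul_cancel (ENNReal.ofReal_pos.2 hT.out).ne' ENNReal.ofReal_ne_top, one_smul]

lemma integral_haar_eq {g : AddCircle T → ℝ} :
    ∫ z, g z ∂(AddCircle.haarAddCircle) = (1/T) * ∫ z, g z ∂volume := by
  rw [haar_eq_smul_volume, MeasureTheory.integral_smul_measure]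
  rw [ENNReal.toReal_inv, ENNReal.toReal_ofReal hT.out.le, smul_eq_mul, one_div]

end helpers

-- === parts lemma pasted ===
lemma fourier_norm_one {T : ℝ} [hT : Fact (0 < T)] (m : ℤ) (x : ℝ) :
    ‖fourier m (x : AddCircle T)‖ = 1 := by
  rw [fourier_apply, Circle.norm_coe]

lemma parts {T : ℝ} [hT : Fact (0 < T)] (a : ℝ) (n : ℤ) (V : ℝ → ℂ)
    (hVi : Integrable V volume)
    (hsupp : ∀ t, t ∉ Ioc a (a + T) → V t = 0)
    (hV0 : ∫ t in Ioc a (a + T), V t = 0) :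
    ∫ t in Ioc a (a + T), V t * fourier (-n) (t : AddCircle T)
      = (2 * π * Complex.I * n / T) *
        ∫ t in Ioc a (a + T), (∫ s in Ioc a t, V s) * fourier (-n) (t : AddCircle T) := by
  set b := a + T with hb
  have hab : a < b := lt_add_of_pos_right a hT.out
  set e : ℝ → ℂ := fun t => fourier (-n) (t : AddCircle T) with he
  have he_cont : Continuous e := (map_continuous (fourier (-n))).comp (AddCircle.continuous_mk' _)
  set c : ℂ := -2 * π * Complex.I * n / T with hc
  have he_deriv : ∀ x : ℝ, HasDerivAt e (c * e x) x := fun x => hasDerivAt_fourier_neg T n x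
  set e' : ℝ → ℂ := fun x => c * e x with he'
  have he'_cont : Continuous e' := continuous_const.mul he_cont
  set μ : Measure ℝ := volume.restrict (Ioc a b) with hμ
  -- the two-variable function
  set G : ℝ × ℝ → ℂ :=
    fun p => ({q : ℝ × ℝ | q.2 ≤ q.1}).indicator (fun q => V q.2 * e' q.1) p with hG
  have hS : MeasurableSet {q : ℝ × ℝ | q.2 ≤ q.1} :=
    measurableSet_le measurable_snd measurable_fst
  have hbase : Integrable (fun p : ℝ × ℝ => V p.2 * e' p.1) (μ.prod volume) := by
    have h1 : Integrable (fun p : ℝ × ℝ => e' p.1 * V p.2) (μ.prod volume) :=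
      Integrable.mul_prod (he'_cont.integrableOn_Ioc) hVi
    simpa [mul_comm] using h1
  have hGint : Integrable G (μ.prod volume) := hbase.indicator hS
  have hswap := integral_integral_swap (f := fun s t => G (s, t)) hGint
  -- evaluate the left side of hswap
  have hleft : (∫ s, ∫ t, G (s, t) ∂volume ∂μ)
      = ∫ s in Ioc a b, (∫ t in Ioc a s, V t) * e' s := by
    apply setIntegral_congr_fun measurableSet_Ioc
    intro s hs
    show (∫ t, G (s, t) ∂volume) = (∫ t in Ioc a s, V t) * e' s
    have h1 : (fun t => G (s, t)) = (Iic s).indicator (fun t => V t * e' s) := by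
      funext t
      by_cases h : t ≤ s <;> simp [hG, indicator, h]
    rw [h1, MeasureTheory.integral_indicator measurableSet_Iic]
    have h2 : (∫ t in Iic s, V t * e' s) = (∫ t in Iic s, V t) * e' s :=
      integral_mul_const _ _
    rw [h2]
    congr 1
    rw [← MeasureTheory.integral_indicator measurableSet_Iic, ← MeasureTheory.integral_indicator measurableSet_Ioc]
    congr 1
    funext t
    by_cases h1t : t ∈ Ioc a s
    · simp [indicator, h1t, h1t.2]
    · by_cases h2t : t ∈ Iic s
      · have : V t = 0 := hsupp t (by
          intro hmem
          exact h1t ⟨hmem.1, h2t⟩)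
        simp [indicator, h1t, h2t, this]
      · simp [indicator, h1t, h2t]
  -- evaluate the right side of hswap
  have hVae : ∀ (g : ℝ → ℂ), (∫ t, V t * g t ∂volume) = ∫ t in Ioc a b, V t * g t := by
    intro g
    rw [← MeasureTheory.integral_indicator measurableSet_Ioc]
    congr 1
    funext t
    by_cases ht : t ∈ Ioc a b
    · simp [indicator, ht]
    · simp [indicator, ht, hsupp t ht]
  have hright : (∫ t, ∫ s, G (s, t) ∂μ ∂volume) = - ∫ t in Ioc a b, V t * e t := by
    have h1 : ∀ t : ℝ, (∫ s, G (s, t) ∂μ) = V t * ∫ s in Ioc a b ∩ Ici t, e' s := by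
      intro t
      have h2 : (fun s => G (s, t)) = (Ici t).indicator (fun s => V t * e' s) := by
        funext s
        by_cases h : t ≤ s <;> simp [hG, indicator, h]
      rw [h2, hμ, setIntegral_indicator measurableSet_Ici, MeasureTheory.integral_const_mul]
    simp_rw [h1]
    rw [hVae (fun t => ∫ s in Ioc a b ∩ Ici t, e' s)]
    have h3 : ∀ t ∈ Ioc a b, V t * (∫ s in Ioc a b ∩ Ici t, e' s) = V t * e b - V t * e t := by
      intro t ht
      have h4 : Ioc a b ∩ Ici t = Icc t b := by
        ext s
        constructor
        · rintro ⟨⟨_, h6⟩, h7⟩; exact ⟨h7, h6⟩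
        · rintro ⟨h6, h7⟩; exact ⟨⟨lt_of_lt_of_le ht.1 h6, h7⟩, h6⟩
      rw [h4, integral_Icc_eq_integral_Ioc, ← intervalIntegral.integral_of_le ht.2,
        intervalIntegral.integral_eq_sub_of_hasDerivAt (fun x _ => he_deriv x)
          (he'_cont.intervalIntegrable _ _)]
      ring
    have hVe : Integrable (fun t => V t * e t) μ := by
      have := Integrable.bdd_mul (c := 1) (hVi.restrict (s := Ioc a b))
        he_cont.aestronglyMeasurable (Filter.Eventually.of_forall fun x => le_of_eq (fourier_norm_one (-n) x))
      simpa [mul_comm] using this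
    rw [setIntegral_congr_fun measurableSet_Ioc h3, MeasureTheory.integral_sub
      ((hVi.restrict (s := Ioc a b)).mul_const _) hVe]
    rw [MeasureTheory.integral_mul_const, hV0]
    ring
  -- combine
  rw [hleft, hright] at hswap
  have hL : (∫ s in Ioc a b, (∫ t in Ioc a s, V t) * e' s)
      = c * ∫ s in Ioc a b, (∫ t in Ioc a s, V t) * e s := by
    rw [← MeasureTheory.integral_const_mul]
    congr 1
    funext s
    simp only [he']
    ring
  rw [hL] at hswap
  have hc' : (2 * (π : ℂ) * Complex.I * n / T) = -c := by rw [hc]; ring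
  rw [hc']
  linear_combination hswap

lemma wirtinger {T : ℝ} [hT2 : Fact (0 < T)] (a : ℝ) (W : ℝ → ℝ) (hWm : Measurable W)
    (hWi : Integrable W volume)
    (hW2 : IntegrableOn (fun t => (W t)^2) (Ioc a (a+T)) volume)
    (hsupp : ∀ t, t ∉ Ioc a (a + T) → W t = 0)
    (hW0 : ∫ t in Ioc a (a + T), W t = 0) :
    (2*π/T)^2 * ((∫ t in Ioc a (a+T), (∫ s in a..t, W s)^2) -
        (∫ t in Ioc a (a+T), ∫ s in a..t, W s)^2 / T)
      ≤ ∫ t in Ioc a (a+T), (W t)^2 := by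
  set b := a + T with hb
  have hab : a < b := lt_add_of_pos_right a hT2.out
  set P : ℝ → ℝ := fun t => ∫ s in a..t, W s with hP
  have hPc : Continuous P :=
    intervalIntegral.continuous_primitive (fun c d => hWi.intervalIntegrable) a
  set U : ℝ → ℂ := fun t => (P t : ℂ) with hU
  set V : ℝ → ℂ := fun t => (W t : ℂ) with hV
  have hVm : Measurable V := Complex.measurable_ofReal.comp hWm
  have hUm : Measurable U := Complex.measurable_ofReal.comp hPc.measurable
  have hVi : Integrable V volume := hWi.ofReal
  have hsuppV : ∀ t, t ∉ Ioc a b → V t = 0 := fun t ht => by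
    simp [hV, hsupp t ht]
  have hV0 : ∫ t in Ioc a b, V t = 0 := by
    have h9 : ∫ t in Ioc a b, V t = ((∫ t in Ioc a b, W t : ℝ) : ℂ) := _root_.integral_ofReal
    rw [h9, hW0, Complex.ofReal_zero]
  -- lifts
  set FU : AddCircle T → ℂ := AddCircle.liftIoc T a U with hFU
  set FV : AddCircle T → ℂ := AddCircle.liftIoc T a V with hFV
  have hFUm : Measurable FU := measurable_liftIoc a hUm
  have hFVm : Measurable FV := measurable_liftIoc a hVm
  -- MemLp
  obtain ⟨C, hC⟩ : ∃ C, ∀ x ∈ Icc a b, ‖U x‖ ≤ C :=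
    (isCompact_Icc (a := a) (b := b)).exists_bound_of_continuousOn
      ((Complex.continuous_ofReal.comp hPc).continuousOn)
  have hULp : MemLp FU 2 AddCircle.haarAddCircle :=
    MemLp.of_bound hFUm.aestronglyMeasurable C
      (Filter.Eventually.of_forall
        (liftIoc_mem_bound a (fun x hx => hC x (Ioc_subset_Icc_self hx))))
  have hsqV : ∀ t, t ∈ Ioc a b → ‖FV (↑t : AddCircle T)‖^2 = (W t)^2 := by
    intro t ht
    rw [hFV, AddCircle.liftIoc_coe_apply ht, hV]
    rw [Complex.norm_real, Real.norm_eq_abs, sq_abs]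
  have hVsq_int : Integrable (fun z => ‖FV z‖^2) (volume : Measure (AddCircle T)) := by
    rw [← (AddCircle.measurePreserving_mk T a).integrable_comp
      ((hFVm.norm.pow_const 2).aestronglyMeasurable)]
    apply hW2.congr
    rw [Filter.EventuallyEq, ae_restrict_iff' measurableSet_Ioc]
    exact Filter.Eventually.of_forall (fun t ht => (hsqV t ht).symm)
  have hVLp : MemLp FV 2 AddCircle.haarAddCircle := by
    rw [memLp_two_iff_integrable_sq_norm hFVm.aestronglyMeasurable]
    rw [haar_eq_smul_volume]
    exact hVsq_int.smul_measure (by simp [ENNReal.inv_ne_top, ENNReal.ofReal_pos, hT2.out])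
  -- Lp elements and Fourier coefficients
  set LU := hULp.toLp FU with hLU
  set LV := hVLp.toLp FV with hLV
  have hcoeU : ∀ n : ℤ, fourierCoeff (⇑LU) n = fourierCoeff FU n := by
    intro n
    apply MeasureTheory.integral_congr_ae
    filter_upwards [hULp.coeFn_toLp] with z hz
    rw [hz]
  have hcoeV : ∀ n : ℤ, fourierCoeff (⇑LV) n = fourierCoeff FV n := by
    intro n
    apply MeasureTheory.integral_congr_ae
    filter_upwards [hVLp.coeFn_toLp] with z hz
    rw [hz]
  set JU : ℤ → ℂ := fun n => ∫ t in Ioc a b, U t * fourier (-n) (t : AddCircle T) with hJUdef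
  set JV : ℤ → ℂ := fun n => ∫ t in Ioc a b, V t * fourier (-n) (t : AddCircle T) with hJVdef
  have hJU : ∀ n, fourierCoeff FU n = (1/T : ℂ) * JU n := by
    intro n
    rw [hFU, fourierCoeff_liftIoc_eq, fourierCoeffOn_eq_integral,
      intervalIntegral.integral_of_le hab.le]
    rw [add_sub_cancel_left, Complex.real_smul]
    push_cast
    congr 1
    apply setIntegral_congr_fun measurableSet_Ioc
    intro t ht
    simp [smul_eq_mul, mul_comm]
  have hJV : ∀ n, fourierCoeff FV n = (1/T : ℂ) * JV n := by
    intro n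
    rw [hFV, fourierCoeff_liftIoc_eq, fourierCoeffOn_eq_integral,
      intervalIntegral.integral_of_le hab.le]
    rw [add_sub_cancel_left, Complex.real_smul]
    push_cast
    congr 1
    apply setIntegral_congr_fun measurableSet_Ioc
    intro t ht
    simp [smul_eq_mul, mul_comm]
  have hrel : ∀ n : ℤ, fourierCoeff (⇑LV) n
      = (2*π*Complex.I*n/T) * fourierCoeff (⇑LU) n := by
    intro n
    have hpp := parts a n V hVi hsuppV hV0
    have hUt : (∫ t in Ioc a b, (∫ s in Ioc a t, V s) * fourier (-n) (t : AddCircle T))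
        = JU n := by
      apply setIntegral_congr_fun measurableSet_Ioc
      intro t ht
      show (∫ s in Ioc a t, V s) * fourier (-n) (t : AddCircle T)
        = U t * fourier (-n) (t : AddCircle T)
      congr 1
      rw [← intervalIntegral.integral_of_le ht.1.le]
      exact intervalIntegral.integral_ofReal
    rw [hUt] at hpp
    have hJVn : JV n = 2*π*Complex.I*(n:ℂ)/(T:ℂ) * JU n := hpp
    rw [hcoeV, hcoeU, hJV, hJU, hJVn]
    ring
  -- Parseval for both
  have hsqU : ∀ t, t ∈ Ioc a b → ‖FU (↑t : AddCircle T)‖^2 = (P t)^2 := by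
    intro t ht
    rw [hFU, AddCircle.liftIoc_coe_apply ht, hU]
    rw [Complex.norm_real, Real.norm_eq_abs, sq_abs]
  set IW2 : ℝ := ∫ t in Ioc a b, (W t)^2 with hIW2
  set IP2 : ℝ := ∫ t in Ioc a b, (P t)^2 with hIP2
  set mP : ℝ := ∫ t in Ioc a b, P t with hmP
  have hParV : ∑' n : ℤ, ‖fourierCoeff (⇑LV) n‖^2 = (1/T) * IW2 := by
    rw [tsum_sq_fourierCoeff LV]
    have h1 : ∫ z, ‖(⇑LV) z‖^2 ∂(AddCircle.haarAddCircle)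
        = ∫ z, ‖FV z‖^2 ∂(AddCircle.haarAddCircle) := by
      apply MeasureTheory.integral_congr_ae
      filter_upwards [hVLp.coeFn_toLp] with z hz
      rw [hz]
    rw [h1, integral_haar_eq]
    congr 1
    rw [← AddCircle.integral_preimage T a (fun z => ‖FV z‖^2)]
    exact setIntegral_congr_fun measurableSet_Ioc (fun t ht => hsqV t ht)
  have hParU : ∑' n : ℤ, ‖fourierCoeff (⇑LU) n‖^2 = (1/T) * IP2 := by
    rw [tsum_sq_fourierCoeff LU]
    have h1 : ∫ z, ‖(⇑LU) z‖^2 ∂(AddCircle.haarAddCircle)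
        = ∫ z, ‖FU z‖^2 ∂(AddCircle.haarAddCircle) := by
      apply MeasureTheory.integral_congr_ae
      filter_upwards [hULp.coeFn_toLp] with z hz
      rw [hz]
    rw [h1, integral_haar_eq]
    congr 1
    rw [← AddCircle.integral_preimage T a (fun z => ‖FU z‖^2)]
    exact setIntegral_congr_fun measurableSet_Ioc (fun t ht => hsqU t ht)
  have hsummable : ∀ f : Lp ℂ 2 (AddCircle.haarAddCircle (T := T)),
      Summable (fun n : ℤ => ‖fourierCoeff (⇑f) n‖^2) := by
    intro f
    have h1 : Summable (fun n : ℤ => ‖fourierBasis.repr f n‖ ^ ((2:ENNReal)).toReal) :=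
      (lp.memℓp (fourierBasis.repr f)).summable (by norm_num)
    have h2 : ∀ n : ℤ, ‖fourierBasis.repr f n‖ ^ ((2:ENNReal)).toReal
        = ‖fourierCoeff (⇑f) n‖^2 := by
      intro n
      rw [fourierBasis_repr]
      rw [show ((2:ENNReal)).toReal = ((2:ℕ):ℝ) by norm_num, Real.rpow_natCast]
    exact h1.congr h2
  set A : ℤ → ℝ := fun n => ‖fourierCoeff (⇑LV) n‖^2 with hA
  set B : ℤ → ℝ := fun n => ‖fourierCoeff (⇑LU) n‖^2 with hB
  have sA : Summable A := hsummable LV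
  have sB : Summable B := hsummable LU
  have hAB : ∀ n : ℤ, (2*π/T)^2 * (if n = 0 then 0 else B n) ≤ A n := by
    intro n
    by_cases hn : n = 0
    · have h0 : (if n = 0 then (0:ℝ) else B n) = 0 := if_pos hn
      rw [h0, mul_zero]
      exact sq_nonneg _
    · rw [if_neg hn]
      have h1 : (2*π*Complex.I*(n:ℂ)/(T:ℂ)) = (((2*π*n/T : ℝ)) : ℂ) * Complex.I := by
        push_cast
        ring
      have h2 : A n = (2*π*n/T)^2 * B n := by
        rw [hA, hB]
        simp only [hrel n, h1, norm_mul, Complex.norm_I, mul_one, Complex.norm_real,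
          Real.norm_eq_abs, mul_pow, sq_abs]
      rw [h2]
      have h3 : (1:ℝ) ≤ (n:ℝ)^2 := by
        have h30 := Int.one_le_abs (show n ≠ 0 from hn)
        have h31 : (1:ℤ) ≤ n^2 := by nlinarith [sq_abs n, abs_nonneg n]
        exact_mod_cast h31
      have h5 : (0:ℝ) ≤ B n := sq_nonneg _
      have h6 : (2*π*n/T)^2 = (2*π/T)^2 * (n:ℝ)^2 := by ring
      nlinarith [mul_nonneg (mul_nonneg (sq_nonneg (2*π/T)) h5) (sub_nonneg.2 h3), h6]
  have hsLHS : Summable (fun n : ℤ => (2*π/T)^2 * (if n = 0 then 0 else B n)) := by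
    apply Summable.of_nonneg_of_le _ hAB sA
    intro n
    by_cases hn : n = 0
    · simp [hn]
    · rw [if_neg hn]
      exact mul_nonneg (sq_nonneg _) (sq_nonneg _)
  have htsle := Summable.tsum_le_tsum hAB hsLHS sA
  rw [tsum_mul_left] at htsle
  have hite : ∑' n : ℤ, (if n = 0 then 0 else B n) = (∑' n, B n) - B 0 := by
    rw [Summable.tsum_eq_add_tsum_ite sB 0]
    ring
  rw [hite, hParV, hParU] at htsle
  have hB0 : B 0 = mP^2/T^2 := by
    have h1 : JU 0 = (mP : ℂ) := by
      rw [hJUdef]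
      simp only [neg_zero, fourier_zero, mul_one]
      exact _root_.integral_ofReal
    show ‖fourierCoeff (⇑LU) 0‖^2 = mP^2/T^2
    rw [hcoeU 0, hJU 0, h1,
      show (1/(T:ℂ)) * (mP:ℂ) = ((mP/T : ℝ) : ℂ) by push_cast; ring,
      Complex.norm_real, Real.norm_eq_abs, sq_abs, div_pow]
  rw [hB0] at htsle
  -- final algebra
  have hT0 : T ≠ 0 := ne_of_gt hT2.out
  have key : (2*π/T)^2 * ((1/T) * IP2 - mP^2/T^2) = (1/T) * ((2*π/T)^2 * (IP2 - mP^2/T)) := by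
    field_simp
  rw [key] at htsle
  have := (mul_le_mul_iff_right₀ (one_div_pos.2 hT2.out)).1 htsle
  exact this
set_option maxHeartbeats 1000000 in
/-- Poincaré-type inequality for functions with small mean. -/
theorem stmt5 (θ : ℝ) (hθ : θ ∈ Set.Ioo 0 π) (u u' : ℝ → ℝ)
    (hu : MemW120 θ u u')
    (hmean : (∫ t in (-θ)..θ, u t)^2 ≤
      (1 / ((1/θ) * (2*π^2 / (π^2 - θ^2)))) * ∫ t in (-θ)..θ, (u t)^2) :
    (∫ t in (-θ)..θ, ((u' t)^2 - (u t)^2)) ≥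
      (1/4) * (1 - θ^2/π^2) * (∫ t in (-θ)..θ, (u' t)^2) +
      (1/2) * (π^2/θ^2 - 1) * ∫ t in (-θ)..θ, (u t)^2 := by
  obtain ⟨h1, h2, h3, h4⟩ := hu
  obtain ⟨hθpos, hθπ⟩ := hθ
  have hle : (-θ : ℝ) ≤ θ := by linarith
  have hθ0 : θ ≠ 0 := ne_of_gt hθpos
  have hπ0 : π ≠ 0 := Real.pi_ne_zero
  have hπθ : (0:ℝ) < π^2 - θ^2 := by nlinarith [Real.pi_pos]
  haveI hfact : Fact ((0:ℝ) < 2*θ) := ⟨by linarith⟩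
  have hid : -θ + 2*θ = θ := by ring
  -- measurable representative of u'
  have hio : IntegrableOn u' (Ioc (-θ) θ) volume := h1.1
  have hms := hio.aestronglyMeasurable
  set W₀ := hms.mk u' with hW₀
  have hae0 : u' =ᵐ[volume.restrict (Ioc (-θ) θ)] W₀ := hms.ae_eq_mk
  set W : ℝ → ℝ := Set.indicator (Ioc (-θ) θ) W₀ with hW
  have hWm : Measurable W := (hms.stronglyMeasurable_mk.measurable).indicator measurableSet_Ioc
  have hae' : u' =ᵐ[volume.restrict (Ioc (-θ) θ)] W := by
    refine hae0.trans ?_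
    rw [Filter.EventuallyEq, ae_restrict_iff' measurableSet_Ioc]
    exact Filter.Eventually.of_forall fun x hx => (Set.indicator_of_mem hx W₀).symm
  have hWi : Integrable W volume := by
    rw [hW, integrable_indicator_iff measurableSet_Ioc]
    exact hio.congr hae0
  have hW2 : IntegrableOn (fun t => W t^2) (Ioc (-θ) θ) volume := by
    refine (h2.1).congr ?_
    filter_upwards [hae'] with x hx
    rw [hx]
  have hsupp : ∀ t, t ∉ Ioc (-θ) θ → W t = 0 := fun t ht => Set.indicator_of_notMem ht W₀
  have hW0 : ∫ t in Ioc (-θ) θ, W t = 0 := by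
    rw [← MeasureTheory.integral_congr_ae hae', ← intervalIntegral.integral_of_le hle]
    have := h3 θ ⟨hle, le_refl θ⟩
    rw [← this, h4]
  -- apply wirtinger
  have hW2' : IntegrableOn (fun t => W t^2) (Ioc (-θ) (-θ+2*θ)) volume := by rw [hid]; exact hW2
  have hsupp' : ∀ t, t ∉ Ioc (-θ) (-θ+2*θ) → W t = 0 := by rw [hid]; exact hsupp
  have hW0' : ∫ t in Ioc (-θ) (-θ+2*θ), W t = 0 := by rw [hid]; exact hW0
  have keyineq := wirtinger (T := 2*θ) (-θ) W hWm hWi hW2' hsupp' hW0'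
  rw [hid] at keyineq
  -- identify the integrals
  have hPW : ∀ t ∈ Ioc (-θ) θ, (∫ s in (-θ)..t, W s) = u t := by
    intro t ht
    have hsub : Ioc (-θ) t ⊆ Ioc (-θ) θ := Ioc_subset_Ioc_right ht.2
    have hae'' : u' =ᵐ[volume.restrict (Ioc (-θ) t)] W :=
      ae_restrict_of_ae_restrict_of_subset hsub hae'
    rw [intervalIntegral.integral_of_le ht.1.le, ← MeasureTheory.integral_congr_ae hae'',
      ← intervalIntegral.integral_of_le ht.1.le]
    exact (h3 t ⟨ht.1.le, ht.2⟩).symm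
  have hIP2 : ∫ t in Ioc (-θ) θ, (∫ s in (-θ)..t, W s)^2 = ∫ t in Ioc (-θ) θ, (u t)^2 := by
    apply setIntegral_congr_fun measurableSet_Ioc
    intro t ht
    show (∫ s in (-θ)..t, W s)^2 = (u t)^2
    rw [hPW t ht]
  have hmPeq : ∫ t in Ioc (-θ) θ, ∫ s in (-θ)..t, W s = ∫ t in Ioc (-θ) θ, u t := by
    apply setIntegral_congr_fun measurableSet_Ioc
    intro t ht
    exact hPW t ht
  have hW2eq : ∫ t in Ioc (-θ) θ, W t^2 = ∫ t in Ioc (-θ) θ, (u' t)^2 := by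
    apply MeasureTheory.integral_congr_ae
    filter_upwards [hae'] with x hx
    rw [hx]
  rw [hIP2, hmPeq, hW2eq] at keyineq
  -- convert goal to Ioc integrals
  set μ2 : ℝ := ∫ t in Ioc (-θ) θ, (u' t)^2 with hμ2
  set ν2 : ℝ := ∫ t in Ioc (-θ) θ, (u t)^2 with hν2
  set m : ℝ := ∫ t in Ioc (-θ) θ, u t with hm
  -- integrability of u^2 on the interval
  have hu'Icc : IntegrableOn u' (Icc (-θ) θ) volume :=
    (integrableOn_Icc_iff_integrableOn_Ioc).2 h1.1
  have hprim : ContinuousOn (fun x => ∫ s in (-θ)..x, u' s) (Icc (-θ) θ) := by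
    have := intervalIntegral.continuousOn_primitive_interval
      (a := -θ) (b := θ) (f := u') (by rwa [uIcc_of_le hle])
    rwa [uIcc_of_le hle] at this
  have hucont : ContinuousOn u (Icc (-θ) θ) := hprim.congr (fun x hx => h3 x hx)
  have hu2 : IntervalIntegrable (fun t => (u t)^2) volume (-θ) θ := by
    apply ContinuousOn.intervalIntegrable
    rw [uIcc_of_le hle]
    exact hucont.pow 2
  have hgoalsub : (∫ t in (-θ)..θ, ((u' t)^2 - (u t)^2)) = μ2 - ν2 := by
    rw [intervalIntegral.integral_sub h2 hu2, hμ2, hν2,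
      intervalIntegral.integral_of_le hle, intervalIntegral.integral_of_le hle]
  have hgν : (∫ t in (-θ)..θ, (u t)^2) = ν2 := by
    rw [hν2, intervalIntegral.integral_of_le hle]
  have hgμ : (∫ t in (-θ)..θ, (u' t)^2) = μ2 := by
    rw [hμ2, intervalIntegral.integral_of_le hle]
  have hgm : (∫ t in (-θ)..θ, u t) = m := by
    rw [hm, intervalIntegral.integral_of_le hle]
  rw [hgν, hgm] at hmean
  rw [hgoalsub, hgν, hgμ]
  -- algebra
  have hν2nonneg : (0:ℝ) ≤ ν2 := by
    rw [hν2]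
    exact setIntegral_nonneg measurableSet_Ioc (fun x _ => sq_nonneg _)
  have hcoef : (1 / ((1/θ) * (2*π^2 / (π^2 - θ^2)))) = θ*(π^2-θ^2)/(2*π^2) := by
    field_simp
  rw [hcoef] at hmean
  have hkey2 : π^2*(2*θ*ν2 - m^2) ≤ 2*θ^3*μ2 := by
    have h5 := mul_le_mul_of_nonneg_left keyineq (show (0:ℝ) ≤ 2*θ^3 by positivity)
    have e : 2*θ^3 * ((2*π/(2*θ))^2 * (ν2 - m^2/(2*θ))) = π^2*(2*θ*ν2 - m^2) := by
      field_simp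
    rw [e] at h5
    linarith
  have hmean2 : 2*π^2*m^2 ≤ θ*(π^2-θ^2)*ν2 := by
    have h5 := mul_le_mul_of_nonneg_left hmean (show (0:ℝ) ≤ 2*π^2 by positivity)
    have e : 2*π^2*(θ*(π^2-θ^2)/(2*π^2)*ν2) = θ*(π^2-θ^2)*ν2 := by
      field_simp
    rw [e] at h5
    linarith
  have h8 : θ * ((3*π^2+θ^2)*ν2) ≤ θ * (4*θ^2*μ2) := by nlinarith [hkey2, hmean2]
  have h9 : (3*π^2+θ^2)*ν2 ≤ 4*θ^2*μ2 := le_of_mul_le_mul_left h8 hθpos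
  rw [ge_iff_le, ← sub_nonneg]
  have expand : μ2 - ν2 - ((1/4)*(1-θ^2/π^2)*μ2 + (1/2)*(π^2/θ^2-1)*ν2)
      = (θ^2*(3*π^2+θ^2)*μ2 - 2*π^2*(π^2+θ^2)*ν2) / (4*π^2*θ^2) := by
    field_simp
    ring
  rw [expand]
  apply div_nonneg _ (by positivity)
  nlinarith [mul_le_mul_of_nonneg_left h9 (show (0:ℝ) ≤ (3*π^2+θ^2) by positivity),
    mul_nonneg (sq_nonneg (π^2-θ^2)) hν2nonneg]
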